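/- Let a, x ∈ ℝ with x ≠ a. For every t > 0, ∫₀^t (|a−x|/s^{3/2}) φ((a−x)/√s) ds = 2·(1 − Φ(|a−x|/√t)). (This is the Bachelier–Lévy formula for the distribution function of the first passage time of Brownian motion through the constant level a, i.e. the case b = 0.) -/

import Mathlib

open Real MeasureTheory Set Filter Topology

/-- Standard Gaussian density φ(z) = (1/√(2π)) e^{−z²/2}. -/
noncomputable def gaussPdf (z : ℝ) : ℝ := (1 / Real.sqrt (2 * π)) * Real.exp (-z ^ 2 / 2)

/-- Standard Gaussian distribution function Φ(y) = ∫_{−∞}^y φ(z) dz. -/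
noncomputable def gaussCdf (y : ℝ) : ℝ := ∫ z in Set.Iio y, gaussPdf z

/-- ψ_t(u) = (e^{−b²u/2}/(π√(u(t−u)))) · [ e^{−b²(t−u)/2}
      + (b/2)·√(2π(t−u)) · (2Φ(b√(t−u)) − 1) ]. -/
noncomputable def psi (b t u : ℝ) : ℝ :=
  (Real.exp (-b ^ 2 * u / 2) / (π * Real.sqrt (u * (t - u)))) *
    (Real.exp (-b ^ 2 * (t - u) / 2) +
      (b / 2) * Real.sqrt (2 * π * (t - u)) *
        (2 * gaussCdf (b * Real.sqrt (t - u)) - 1))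

/-- Inverse Gaussian first-passage density f_{τ₁}(t) = (|a−x|/t^{3/2}) φ((a+bt−x)/√t). -/
noncomputable def invGaussPdf (a x b t : ℝ) : ℝ :=
  (|a - x| / t ^ ((3 : ℝ) / 2)) * gaussPdf ((a + b * t - x) / Real.sqrt t)

lemma gaussPdf_continuous : Continuous gaussPdf := by
  unfold gaussPdf; fun_prop

lemma gaussPdf_nonneg (z : ℝ) : 0 ≤ gaussPdf z := by
  unfold gaussPdf
  positivity

lemma gaussPdf_integrable : Integrable gaussPdf := by
  have h : Integrable (fun z : ℝ => Real.exp (-(1/2 : ℝ) * z ^ 2)) :=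
    integrable_exp_neg_mul_sq (by norm_num)
  have h2 := h.const_mul (1 / Real.sqrt (2 * π))
  have heq : (fun z : ℝ => 1 / Real.sqrt (2 * π) * Real.exp (-(1/2 : ℝ) * z ^ 2)) = gaussPdf := by
    funext z
    unfold gaussPdf
    congr 1
    ring_nf
  rwa [heq] at h2

lemma gaussPdf_integral : ∫ z, gaussPdf z = 1 := by
  have h : ∫ z : ℝ, Real.exp (-(1/2 : ℝ) * z ^ 2) = Real.sqrt (π / (1/2)) :=
    integral_gaussian (1/2)
  have hπ : Real.sqrt (2 * π) ≠ 0 := (Real.sqrt_pos.mpr (by positivity)).ne'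
  unfold gaussPdf
  rw [MeasureTheory.integral_const_mul]
  simp_rw [show ∀ z : ℝ, -z ^ 2 / 2 = -(1/2 : ℝ) * z ^ 2 from fun z => by ring]
  rw [h, show π / (1/2 : ℝ) = 2 * π by ring]
  field_simp

lemma gaussCdf_eq (y : ℝ) :
    gaussCdf y = (∫ z in Iic (0:ℝ), gaussPdf z) + ∫ z in (0:ℝ)..y, gaussPdf z := by
  rw [gaussCdf, ← MeasureTheory.integral_Iic_eq_integral_Iio,
    ← intervalIntegral.integral_Iic_sub_Iic gaussPdf_integrable.integrableOn
      gaussPdf_integrable.integrableOn]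
  ring

lemma hasDerivAt_gaussCdf (y : ℝ) : HasDerivAt gaussCdf (gaussPdf y) y := by
  have h : HasDerivAt (fun u => ∫ z in (0:ℝ)..u, gaussPdf z) (gaussPdf y) y :=
    intervalIntegral.integral_hasDerivAt_right
      gaussPdf_integrable.intervalIntegrable
      (gaussPdf_continuous.stronglyMeasurableAtFilter _ _)
      gaussPdf_continuous.continuousAt
  have h2 := h.const_add (∫ z in Iic (0:ℝ), gaussPdf z)
  have heq : (fun u => (∫ z in Iic (0:ℝ), gaussPdf z) + ∫ z in (0:ℝ)..u, gaussPdf z)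
      = gaussCdf := funext fun u => (gaussCdf_eq u).symm
  rwa [heq] at h2

lemma gaussCdf_continuous : Continuous gaussCdf :=
  continuous_iff_continuousAt.mpr fun y => (hasDerivAt_gaussCdf y).continuousAt

lemma gaussCdf_tendsto_atTop : Tendsto gaussCdf atTop (𝓝 1) := by
  have h : Tendsto (fun y : ℝ => ∫ z in (0:ℝ)..y, gaussPdf z) atTop
      (𝓝 (∫ z in Ioi (0:ℝ), gaussPdf z)) :=
    intervalIntegral_tendsto_integral_Ioi 0 gaussPdf_integrable.integrableOn tendsto_id
  have h2 := h.const_add (∫ z in Iic (0:ℝ), gaussPdf z)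
  have h3 : (∫ z in Iic (0:ℝ), gaussPdf z) + ∫ z in Ioi (0:ℝ), gaussPdf z = 1 := by
    rw [intervalIntegral.integral_Iic_add_Ioi gaussPdf_integrable.integrableOn
      gaussPdf_integrable.integrableOn, gaussPdf_integral]
  rw [h3] at h2
  have heq : (fun y => (∫ z in Iic (0:ℝ), gaussPdf z) + ∫ z in (0:ℝ)..y, gaussPdf z)
      = gaussCdf := funext fun u => (gaussCdf_eq u).symm
  rwa [heq] at h2

theorem stmt10 (a x : ℝ) (hax : x ≠ a) (t : ℝ) (ht : 0 < t) :
    ∫ s in (0 : ℝ)..t, (|a - x| / s ^ ((3 : ℝ) / 2)) * gaussPdf ((a - x) / Real.sqrt s)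
      = 2 * (1 - gaussCdf (|a - x| / Real.sqrt t)) := by
  set c := |a - x| with hc_def
  have hc : 0 < c := abs_pos.mpr (sub_ne_zero.mpr hax.symm)
  set f' : ℝ → ℝ := fun s => (c / s ^ ((3:ℝ)/2)) * gaussPdf (c / Real.sqrt s) with hf'_def
  set G : ℝ → ℝ := fun s => if s ≤ 0 then (-2 : ℝ) else -2 * gaussCdf (c / Real.sqrt s)
    with hG_def
  -- integrand equality
  have hfeq : ∀ s : ℝ, (|a - x| / s ^ ((3:ℝ)/2)) * gaussPdf ((a - x) / Real.sqrt s) = f' s := by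
    intro s
    rcases abs_cases (a - x) with ⟨h1, _⟩ | ⟨h1, _⟩
    · rw [hf'_def, hc_def, h1]
    · rw [hf'_def, hc_def, h1]
      congr 1
      unfold gaussPdf
      rw [neg_div]
      congr 2
      ring
  -- derivative of G on Ioo 0 t
  have hderiv : ∀ s ∈ Ioo (0:ℝ) t, HasDerivAt G (f' s) s := by
    intro s hs
    have hs0 : 0 < s := hs.1
    have hsp : 0 < Real.sqrt s := Real.sqrt_pos.mpr hs0
    have hne : Real.sqrt s ≠ 0 := hsp.ne'
    have h32 : s ^ ((3:ℝ)/2) = s * Real.sqrt s := by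
      rw [Real.sqrt_eq_rpow, show (3:ℝ)/2 = 1 + 1/2 by norm_num, Real.rpow_add hs0,
        Real.rpow_one]
    have hdiv : HasDerivAt (fun u => c / Real.sqrt u) (-(c / (2 * s ^ ((3:ℝ)/2)))) s := by
      have h := (hasDerivAt_const s c).div (Real.hasDerivAt_sqrt hs0.ne') hne
      have heq : -(c / (2 * s ^ ((3:ℝ)/2)))
          = (0 * Real.sqrt s - c * (1 / (2 * Real.sqrt s))) / Real.sqrt s ^ 2 := by
        rw [h32, Real.sq_sqrt hs0.le]
        field_simp
        ring
      rw [heq]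
      exact h
    have hcomp := (hasDerivAt_gaussCdf (c / Real.sqrt s)).comp s hdiv
    have hG2 := hcomp.const_mul (-2 : ℝ)
    have hev : (fun u => -2 * gaussCdf (c / Real.sqrt u)) =ᶠ[𝓝 s] G := by
      filter_upwards [Ioi_mem_nhds hs0] with u hu
      simp [hG_def, not_le.mpr (mem_Ioi.mp hu)]
    have hfinal := hG2.congr_of_eventuallyEq hev.symm
    refine hfinal.congr_deriv ?_
    rw [hf'_def]
    ring
  -- continuity of G on Icc 0 t
  have hcont : ContinuousOn G (Icc 0 t) := by
    intro s hs
    rcases eq_or_lt_of_le hs.1 with rfl | hs0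
    · -- s = 0
      have hIci : ContinuousWithinAt G (Ici 0) 0 := by
        rw [← Set.Ioi_insert, continuousWithinAt_insert_self]
        have hG0 : G 0 = -2 := by simp [hG_def]
        unfold ContinuousWithinAt
        rw [hG0]
        have hsq : Tendsto Real.sqrt (𝓝[>] (0:ℝ)) (𝓝[>] (0:ℝ)) := by
          rw [tendsto_nhdsWithin_iff]
          refine ⟨?_, ?_⟩
          · have := (Real.continuous_sqrt.tendsto (0:ℝ))
            rw [Real.sqrt_zero] at this
            exact this.mono_left nhdsWithin_le_nhds
          · exact eventually_mem_nhdsWithin.mono fun u hu => Real.sqrt_pos.mpr hu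
        have hinv : Tendsto (fun u => (Real.sqrt u)⁻¹) (𝓝[>] (0:ℝ)) atTop :=
          tendsto_inv_nhdsGT_zero.comp hsq
        have hdivtop : Tendsto (fun u => c / Real.sqrt u) (𝓝[>] (0:ℝ)) atTop := by
          simpa [div_eq_mul_inv] using hinv.const_mul_atTop hc
        have hΦ : Tendsto (fun u => -2 * gaussCdf (c / Real.sqrt u)) (𝓝[>] (0:ℝ))
            (𝓝 (-2 : ℝ)) := by
          have := (gaussCdf_tendsto_atTop.comp hdivtop).const_mul (-2 : ℝ)
          simpa using this
        refine hΦ.congr' ?_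
        filter_upwards [eventually_mem_nhdsWithin] with u hu
        simp [hG_def, not_le.mpr (mem_Ioi.mp hu)]
      exact hIci.mono Icc_subset_Ici_self
    · -- s > 0
      have hne : Real.sqrt s ≠ 0 := (Real.sqrt_pos.mpr hs0).ne'
      have hca : ContinuousAt (fun u => -2 * gaussCdf (c / Real.sqrt u)) s := by
        refine ContinuousAt.mul continuousAt_const ?_
        exact gaussCdf_continuous.continuousAt.comp
          (ContinuousAt.div continuousAt_const Real.continuous_sqrt.continuousAt hne)
      have hev : (fun u => -2 * gaussCdf (c / Real.sqrt u)) =ᶠ[𝓝 s] G := by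
        filter_upwards [Ioi_mem_nhds hs0] with u hu
        simp [hG_def, not_le.mpr (mem_Ioi.mp hu)]
      exact (hca.congr hev).continuousWithinAt
  -- interval integrability of f'
  have hint : IntervalIntegrable f' volume 0 t := by
    apply intervalIntegral.intervalIntegrable_deriv_of_nonneg
      (g := G)
    · rwa [uIcc_of_le ht.le]
    · intro u hu
      rw [min_eq_left ht.le, max_eq_right ht.le] at hu
      exact hderiv u hu
    · intro u hu
      rw [min_eq_left ht.le, max_eq_right ht.le] at hu
      exact mul_nonneg (div_nonneg hc.le (Real.rpow_nonneg hu.1.le _)) (gaussPdf_nonneg _)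
  -- conclude
  have hceq : ∫ s in (0:ℝ)..t, (c / s ^ ((3:ℝ)/2)) * gaussPdf ((a - x) / Real.sqrt s)
      = ∫ s in (0:ℝ)..t, f' s := by
    apply intervalIntegral.integral_congr
    intro u _
    exact hfeq u
  rw [hceq, intervalIntegral.integral_eq_sub_of_hasDerivAt_of_le ht.le hcont hderiv hint]
  have hGt : G t = -2 * gaussCdf (c / Real.sqrt t) := by simp [hG_def, not_le.mpr ht]
  have hG0 : G 0 = -2 := by simp [hG_def]
  rw [hGt, hG0]
  ring
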